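/- arXiv:1407.4793 — 9 statements merged into one kernel-verified Lean document; each statement's English description precedes it below -/
import Mathlib

section
/- Let (θ, w, x) be a Frobenius algebra in a simple strict C* tensor category (i.e., w ∈ Hom(id, θ), x ∈ Hom(θ, θ²) satisfy the unit property (w* × 1_θ)∘x = (1_θ × w*)∘x = 1_θ, associativity (x × 1_θ)∘x = (1_θ × x)∘x, and the Frobenius property (1_θ × x*)∘(x × 1_θ) = x∘x* = (x* × 1_θ)∘(1_θ × x)). Then the Frobenius algebra is special (i.e., x*∘x = λ·1_θ for some scalar λ) if and only if x*∘x∘w = λ·w is a scalar multiple of w. In particular, every Frobenius algebra with dim Hom(id, θ) = 1 is special. -/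
/-- **Lemma 3.2** (Q-systems paper). A Frobenius algebra `(θ, w, x)` in a simple strict
C* tensor category — realized concretely inside `End₀(N)` for a C*-algebra `N`, where
morphisms are elements of `N` intertwining powers of the endomorphism `θ`, the monoidal
product of morphisms is `t₁ × t₂ = t₁ · α₁(t₂)` and concatenation is the operator
product — is *special* (`x*∘x` a scalar multiple of `1_θ`) if and only if
`x*∘x∘w` is a scalar multiple of `w`.  In particular, every Frobenius algebra with
`dim Hom(id, θ) = 1` is special. -/
theorem frobenius_special_iff_on_unit
    {N : Type*} [NormedRing N] [StarRing N] [CStarRing N]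
    [NormedAlgebra ℂ N] [StarModule ℂ N]
    (θ : N →⋆ₐ[ℂ] N)
    -- simplicity of the category: Hom(id, id) = ℂ·1
    (hsimple : ∀ c : N, (∀ n : N, c * n = n * c) → ∃ lam : ℂ, c = lam • (1 : N))
    (w x : N)
    (hw : ∀ n : N, w * n = θ n * w)                 -- `w ∈ Hom(id, θ)`
    (hx : ∀ n : N, x * θ n = θ (θ n) * x)           -- `x ∈ Hom(θ, θ²)`
    (hunit₁ : star w * x = 1)                        -- `(w* × 1_θ) ∘ x = 1_θ`
    (hunit₂ : θ (star w) * x = 1)                    -- `(1_θ × w*) ∘ x = 1_θ`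
    (hassoc : x * x = θ x * x)                       -- `(x × 1_θ) ∘ x = (1_θ × x) ∘ x`
    (hfrob₁ : θ (star x) * x = x * star x)           -- Frobenius property
    (hfrob₂ : x * star x = star x * θ x) :
    ((∃ lam : ℂ, star x * x = lam • (1 : N)) ↔
        ∃ lam : ℂ, star x * x * w = lam • w) ∧
    ((∀ w' : N, (∀ n : N, w' * n = θ n * w') → ∃ c : ℂ, w' = c • w) →
        ∃ lam : ℂ, star x * x = lam • (1 : N)) := by
  -- `r := star x * x` is self-adjoint
  have hr_self : star (star x * x) = star x * x := by
    simp [star_mul]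
  -- key identity: `x * (x* x) = θ(x* x) * x`
  have keyA : x * (star x * x) = θ (star x * x) * x := by
    calc x * (star x * x) = (x * star x) * x := (mul_assoc _ _ _).symm
      _ = (θ (star x) * x) * x := by rw [← hfrob₁]
      _ = θ (star x) * (x * x) := mul_assoc _ _ _
      _ = θ (star x) * (θ x * x) := by rw [hassoc]
      _ = (θ (star x) * θ x) * x := (mul_assoc _ _ _).symm
      _ = θ (star x * x) * x := by rw [map_mul]
  -- the backward implication
  have back : ∀ lam : ℂ, star x * x * w = lam • w →
      ∃ mu : ℂ, star x * x = mu • (1 : N) := by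
    intro lam h
    have h1 : star w * (star x * x) = (starRingEnd ℂ lam) • star w := by
      have h' := congrArg star h
      rw [star_mul, hr_self, star_smul] at h'
      simpa using h'
    refine ⟨starRingEnd ℂ lam, ?_⟩
    calc star x * x = 1 * (star x * x) := (one_mul _).symm
      _ = (θ (star w) * x) * (star x * x) := by rw [hunit₂]
      _ = θ (star w) * (x * (star x * x)) := mul_assoc _ _ _
      _ = θ (star w) * (θ (star x * x) * x) := by rw [keyA]
      _ = (θ (star w) * θ (star x * x)) * x := (mul_assoc _ _ _).symm
      _ = θ (star w * (star x * x)) * x := by rw [← map_mul]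
      _ = θ ((starRingEnd ℂ lam) • star w) * x := by rw [h1]
      _ = (starRingEnd ℂ lam) • (θ (star w) * x) := by rw [map_smul, smul_mul_assoc]
      _ = (starRingEnd ℂ lam) • (1 : N) := by rw [hunit₂]
  -- `x* ∈ Hom(θ², θ)`
  have hxstar : ∀ n : N, θ n * star x = star x * θ (θ n) := by
    intro n
    have h' := congrArg star (hx (star n))
    simpa [star_mul, map_star] using h'
  -- `x* x ∈ Hom(θ, θ)`
  have hrhom : ∀ n : N, star x * x * θ n = θ n * (star x * x) := by
    intro n
    calc star x * x * θ n = star x * (x * θ n) := mul_assoc _ _ _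
      _ = star x * (θ (θ n) * x) := by rw [hx]
      _ = (star x * θ (θ n)) * x := (mul_assoc _ _ _).symm
      _ = (θ n * star x) * x := by rw [← hxstar]
      _ = θ n * (star x * x) := mul_assoc _ _ _
  constructor
  · constructor
    · rintro ⟨lam, h⟩
      exact ⟨lam, by rw [h, smul_mul_assoc, one_mul]⟩
    · rintro ⟨lam, h⟩
      exact back lam h
  · intro hdim
    have hmem : ∀ n : N, (star x * x * w) * n = θ n * (star x * x * w) := by
      intro n
      calc (star x * x * w) * n = star x * x * (w * n) := mul_assoc _ _ _
        _ = star x * x * (θ n * w) := by rw [hw]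
        _ = (star x * x * θ n) * w := (mul_assoc _ _ _).symm
        _ = (θ n * (star x * x)) * w := by rw [hrhom]
        _ = θ n * (star x * x * w) := mul_assoc _ _ _
    obtain ⟨c, hc⟩ := hdim _ hmem
    exact back c hc
end

section
/- Let (θ, w, x) be a Frobenius algebra in a simple C* tensor category and set n := x*∘x ∈ Hom(θ, θ). Then n is a strictly positive element of Hom(θ, θ) (it satisfies n ≥ d⁻¹·1_θ, where w*∘w = d·1), and n satisfies (1_θ × n)∘x = x∘n = (n × 1_θ)∘x. -/
/-- **Lemma 3.4**. For a Frobenius algebra `(θ, w, x)` in a simple C* tensor category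
(realized in `End₀(N)`), the element `n := x*∘x ∈ Hom(θ, θ)` is strictly positive —
indeed `n ≥ d⁻¹·1_θ` where `w*∘w = d·1` — and `n` lies in `Hom₀(θ,θ)`, i.e.
`(1_θ × n)∘x = x∘n = (n × 1_θ)∘x`. -/
theorem frobenius_xx_strictly_positive_and_central
    {N : Type*} [NormedRing N] [StarRing N] [CStarRing N]
    [NormedAlgebra ℂ N] [StarModule ℂ N]
    [PartialOrder N] [StarOrderedRing N]
    (θ : N →⋆ₐ[ℂ] N)
    -- simplicity of the category: Hom(id, id) = ℂ·1
    (hsimple : ∀ c : N, (∀ n : N, c * n = n * c) → ∃ lam : ℂ, c = lam • (1 : N))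
    (w x : N)
    (hw : ∀ n : N, w * n = θ n * w)                 -- `w ∈ Hom(id, θ)`
    (hx : ∀ n : N, x * θ n = θ (θ n) * x)           -- `x ∈ Hom(θ, θ²)`
    (hunit₁ : star w * x = 1)                        -- unit property
    (hunit₂ : θ (star w) * x = 1)
    (hassoc : x * x = θ x * x)                       -- associativity
    (hfrob₁ : θ (star x) * x = x * star x)           -- Frobenius property
    (hfrob₂ : x * star x = star x * θ x)
    (d : ℝ) (hd : 0 < d)
    (hww : star w * w = (d : ℂ) • (1 : N)) :         -- `w*∘w = d·1`
    (((d⁻¹ : ℝ) : ℂ) • (1 : N) ≤ star x * x) ∧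
    θ (star x * x) * x = x * (star x * x) ∧          -- `(1_θ × n)∘x = x∘n`
    x * (star x * x) = (star x * x) * x := by        -- `x∘n = (n × 1_θ)∘x`
  have hc0 : ((d : ℝ) : ℂ) ≠ 0 := Complex.ofReal_ne_zero.mpr (ne_of_gt hd)
  set c : ℂ := ((d : ℝ) : ℂ) with hc
  have hxw : star x * w = 1 := by
    have := congrArg star hunit₁
    simpa using this
  set p : N := c⁻¹ • (w * star w) with hp
  have hpsq : p * p = p := by
    have h1 : (w * star w) * (w * star w) = c • (w * star w) := by
      calc (w * star w) * (w * star w) = w * (star w * w) * star w := by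
            rw [mul_assoc, mul_assoc, mul_assoc]
        _ = w * (c • (1:N)) * star w := by rw [hww]
        _ = c • (w * star w) := by
            simp [mul_smul_comm, smul_mul_assoc]
    calc p * p = (c⁻¹ * c⁻¹) • ((w * star w) * (w * star w)) := by
          simp [hp, smul_mul_assoc, mul_smul_comm, smul_smul]
      _ = (c⁻¹ * c⁻¹ * c) • (w * star w) := by rw [h1, smul_smul]
      _ = p := by
          rw [hp]; congr 1
          field_simp
  have hpstar : star p = p := by
    simp [hp, hc, star_smul, map_inv₀, Complex.star_def, Complex.conj_ofReal, mul_comm]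
  have hple : p ≤ 1 := by
    have key : (1 : N) - p = star (1 - p) * (1 - p) := by
      have h2 : (1 - p) * (1 - p) = 1 - p := by
        rw [sub_mul, mul_sub, mul_sub, one_mul, one_mul, mul_one, hpsq]
        abel
      rw [star_sub, star_one, hpstar, h2]
    have h3 : (0 : N) ≤ 1 - p := key ▸ star_mul_self_nonneg (1 - p)
    exact sub_nonneg.mp h3
  have hconj : star x * p * x ≤ star x * 1 * x := star_left_conjugate_le_conjugate hple x
  have hval : star x * p * x = c⁻¹ • (1 : N) := by
    calc star x * p * x = c⁻¹ • ((star x * w) * (star w * x)) := by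
          simp [hp, smul_mul_assoc, mul_smul_comm, mul_assoc]
      _ = c⁻¹ • (1 : N) := by rw [hxw, hunit₁, one_mul]
  refine ⟨?_, ?_, ?_⟩
  · have h4 : c⁻¹ • (1 : N) ≤ star x * x := by
      rw [← hval]
      simpa using hconj
    simpa [hc, ← Complex.ofReal_inv] using h4
  · calc θ (star x * x) * x = θ (star x) * (θ x * x) := by rw [map_mul, mul_assoc]
      _ = θ (star x) * (x * x) := by rw [← hassoc]
      _ = (θ (star x) * x) * x := by rw [mul_assoc]
      _ = (x * star x) * x := by rw [hfrob₁]
      _ = x * (star x * x) := by rw [mul_assoc]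
  · calc x * (star x * x) = (x * star x) * x := by rw [mul_assoc]
      _ = star x * (θ x * x) := by rw [hfrob₂, mul_assoc]
      _ = star x * (x * x) := by rw [← hassoc]
      _ = (star x * x) * x := by rw [mul_assoc]
end

section
/- Let (θ, w, x) be a Frobenius algebra in a simple C* tensor category, with n := x*∘x invertible and positive. Then the deformed triple (θ, ŵ, x̂) with ŵ := n^{1/2}∘w and x̂ := (n^{-1/2} × n^{-1/2})∘x∘n^{1/2} is again a Frobenius algebra, and it is special: x̂*∘x̂ = 1_θ. -/
/-- **Corollary 3.5**. Let `(θ, w, x)` be a Frobenius algebra in a simple C* tensor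
category with `n := x*∘x` invertible and positive.  With `s = n^{1/2}` and
`t = n^{-1/2}` (its functional-calculus powers, which lie in `Hom₀(θ,θ)`), the
deformed triple `(θ, ŵ = n^{1/2}∘w, x̂ = (n^{-1/2} × n^{-1/2})∘x∘n^{1/2})` is again
a Frobenius algebra, and it is special: `x̂*∘x̂ = 1_θ`.
(Operator realization: `ŵ = s·w`, `x̂ = t·θ(t)·x·s`.) -/
theorem frobenius_deformation_is_special
    {N : Type*} [NormedRing N] [StarRing N] [CStarRing N]
    [NormedAlgebra ℂ N] [StarModule ℂ N]
    [PartialOrder N] [StarOrderedRing N]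
    (θ : N →⋆ₐ[ℂ] N)
    (hsimple : ∀ c : N, (∀ n : N, c * n = n * c) → ∃ lam : ℂ, c = lam • (1 : N))
    (w x : N)
    (hw : ∀ n : N, w * n = θ n * w)
    (hx : ∀ n : N, x * θ n = θ (θ n) * x)
    (hunit₁ : star w * x = 1)
    (hunit₂ : θ (star w) * x = 1)
    (hassoc : x * x = θ x * x)
    (hfrob₁ : θ (star x) * x = x * star x)
    (hfrob₂ : x * star x = star x * θ x)
    -- `s = n^{1/2}`, `t = n^{-1/2}`:  `n = x*∘x` is positive and invertible
    (s t : N)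
    (hs_pos : (0 : N) ≤ s)
    (hs_sq : s * s = star x * x)
    (hst : s * t = 1) (hts : t * s = 1)
    -- the powers `n^{±1/2}` lie in `Hom₀(θ, θ)`
    (hs_int : ∀ n : N, s * θ n = θ n * s)
    (hs_hom₁ : θ s * x = x * s) (hs_hom₂ : s * x = x * s)
    (ht_hom₁ : θ t * x = x * t) (ht_hom₂ : t * x = x * t) :
    (let wh : N := s * w
     let xh : N := t * θ t * x * s
     -- `(θ, ŵ, x̂)` is again a Frobenius algebra …
     (∀ n : N, wh * n = θ n * wh) ∧
     (∀ n : N, xh * θ n = θ (θ n) * xh) ∧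
     star wh * xh = 1 ∧
     θ (star wh) * xh = 1 ∧
     xh * xh = θ xh * xh ∧
     θ (star xh) * xh = xh * star xh ∧
     xh * star xh = star xh * θ xh ∧
     -- … and it is special:
     star xh * xh = 1) := by
  have sst : star s = s := (IsSelfAdjoint.of_nonneg hs_pos).star_eq
  have stt : star t = t := by
    have h1 : star t * s = 1 := by rw [← sst, ← star_mul, hst, star_one]
    calc star t = star t * (s * t) := by rw [hst, mul_one]
      _ = star t * s * t := by rw [mul_assoc]
      _ = t := by rw [h1, one_mul]
  have ht_int : ∀ m : N, t * θ m = θ m * t := by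
    intro m
    calc t * θ m = t * (θ m * s) * t := by rw [mul_assoc, mul_assoc, hst, mul_one]
      _ = t * (s * θ m) * t := by rw [hs_int]
      _ = θ m * t := by rw [← mul_assoc, hts, one_mul]
  have hsx : star x * s = s * star x := by
    simpa [star_mul, sst] using congrArg star hs_hom₂
  have htx : star x * t = t * star x := by
    simpa [star_mul, stt] using congrArg star ht_hom₂
  have hsx1 : star x * θ s = s * star x := by
    simpa [star_mul, sst, ← map_star] using congrArg star hs_hom₁
  have htx1 : star x * θ t = t * star x := by
    simpa [star_mul, stt, ← map_star] using congrArg star ht_hom₁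
  have key : star x * t = star x * θ t := htx.trans htx1.symm
  have θts : θ t * θ s = (1 : N) := by rw [← map_mul, hts, map_one]
  have θst : θ s * θ t = (1 : N) := by rw [← map_mul, hst, map_one]
  have hθt_θx : θ t * θ x = θ x * θ t := by rw [← map_mul, ← map_mul, ht_hom₂]
  have hθθt_θx : θ (θ t) * θ x = θ x * θ t := by rw [← map_mul, ← map_mul, ht_hom₁]
  have hθt_θθ : ∀ m : N, θ t * θ (θ m) = θ (θ m) * θ t := fun m => by
    rw [← map_mul, ← map_mul, ht_int]
  have lift2 : ∀ {a b c d : N}, a * b = c * d → ∀ z : N, a * (b * z) = c * (d * z) := by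
    intro a b c d h z; rw [← mul_assoc, h, mul_assoc]
  have l_st : ∀ z : N, s * (t * z) = z := fun z => by rw [← mul_assoc, hst, one_mul]
  have l_ts : ∀ z : N, t * (s * z) = z := fun z => by rw [← mul_assoc, hts, one_mul]
  have l_θst : ∀ z : N, θ s * (θ t * z) = z := fun z => by rw [← mul_assoc, θst, one_mul]
  -- (1) unit intertwines
  have g1 : ∀ n : N, (s * w) * n = θ n * (s * w) := by
    intro n
    rw [mul_assoc, hw n, ← mul_assoc, hs_int n, mul_assoc]
  -- (2) comultiplication intertwines
  have g2 : ∀ m : N, (t * θ t * x * s) * θ m = θ (θ m) * (t * θ t * x * s) := by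
    intro m
    simp only [mul_assoc]
    rw [hs_int m, lift2 (hx m), lift2 (hθt_θθ m), lift2 (ht_int (θ m))]
  -- (3) first unit law
  have g3 : star (s * w) * (t * θ t * x * s) = 1 := by
    simp only [star_mul, sst, mul_assoc]
    rw [l_st, lift2 ht_hom₁, hts, mul_one, hunit₁]
  -- (4) second unit law
  have g4 : θ (star (s * w)) * (t * θ t * x * s) = 1 := by
    simp only [star_mul, sst, map_mul, mul_assoc]
    rw [lift2 (ht_int s).symm, l_θst, lift2 ht_hom₂, hts, mul_one, hunit₂]
  -- (5) associativity
  have g5 : (t * θ t * x * s) * (t * θ t * x * s)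
      = θ (t * θ t * x * s) * (t * θ t * x * s) := by
    simp only [map_mul, mul_assoc]
    conv_lhs => rw [l_st, lift2 ht_hom₁, lift2 ht_hom₁, hts, mul_one, ht_hom₂,
      lift2 ht_hom₂, lift2 ht_hom₂]
    conv_rhs => rw [lift2 (ht_int s).symm, l_θst, lift2 ht_hom₂, hts, mul_one,
      ← hassoc, lift2 (hx t).symm, ht_hom₁, lift2 ht_hom₁, lift2 ht_hom₂]
  -- (6) first Frobenius law
  have g6 : θ (star (t * θ t * x * s)) * (t * θ t * x * s)
      = (t * θ t * x * s) * star (t * θ t * x * s) := by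
    simp only [star_mul, ← map_star, sst, stt, map_mul, mul_assoc]
    conv_lhs => rw [lift2 ht_hom₁, hts, mul_one, ht_hom₂, lift2 ht_hom₁,
      lift2 (hx t).symm, lift2 hfrob₁, lift2 hs_hom₁, lift2 hsx1.symm, l_θst,
      lift2 key, ← ht_int t, lift2 key]
    conv_rhs => rw [lift2 hsx1.symm, l_θst, htx, l_st, lift2 ht_hom₁,
      ← htx1, lift2 ht_hom₂, lift2 htx1.symm]
  -- (7) second Frobenius law
  have g7 : (t * θ t * x * s) * star (t * θ t * x * s)
      = star (t * θ t * x * s) * θ (t * θ t * x * s) := by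
    simp only [star_mul, ← map_star, sst, stt, map_mul, mul_assoc]
    conv_lhs => rw [lift2 hsx1.symm, l_θst, htx, l_st, lift2 ht_hom₁,
      ← htx1, lift2 ht_hom₂, lift2 htx1.symm]
    conv_rhs => rw [lift2 hθθt_θx, θts, mul_one, hθt_θx, lift2 (ht_int x),
      lift2 hθt_θx, lift2 hfrob₂.symm, lift2 hs_hom₂, lift2 hsx1.symm, l_θst,
      lift2 key]
  -- (8) speciality
  have g8 : star (t * θ t * x * s) * (t * θ t * x * s) = 1 := by
    simp only [star_mul, ← map_star, sst, stt, mul_assoc]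
    rw [lift2 ht_hom₁, hts, mul_one, ht_hom₂, lift2 ht_hom₂, lift2 ht_hom₁,
      lift2 hs_sq.symm, l_st, l_st, hst]
  exact ⟨g1, g2, g3, g4, g5, g6, g7, g8⟩
end

section
/- In a C* tensor category, the Frobenius property is a consequence of the unit property, associativity, and specialness. That is, if θ is an object, w : id → θ and x : θ → θ² satisfy (w* × 1_θ)∘x = (1_θ × w*)∘x = 1_θ, (x × 1_θ)∘x = (1_θ × x)∘x, and x*∘x = d·1_θ for some scalar d, then (1_θ × x*)∘(x × 1_θ) = x∘x* = (x* × 1_θ)∘(1_θ × x). -/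
/-- **Lemma 3.8** (essentially [LRo]).  In a C* tensor category, the Frobenius
property is a consequence of the unit property, associativity, and specialness:
if `w : id → θ` and `x : θ → θ²` satisfy `(w* × 1_θ)∘x = (1_θ × w*)∘x = 1_θ`,
`(x × 1_θ)∘x = (1_θ × x)∘x` and `x*∘x = d·1_θ`, then
`(1_θ × x*)∘(x × 1_θ) = x∘x* = (x* × 1_θ)∘(1_θ × x)`. -/
theorem frobenius_property_from_specialness
    {N : Type*} [NormedRing N] [StarRing N] [CStarRing N]
    [NormedAlgebra ℂ N] [StarModule ℂ N]
    (θ : N →⋆ₐ[ℂ] N) (w x : N)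
    (hw : ∀ n : N, w * n = θ n * w)                 -- `w ∈ Hom(id, θ)`
    (hx : ∀ n : N, x * θ n = θ (θ n) * x)           -- `x ∈ Hom(θ, θ²)`
    (hunit₁ : star w * x = 1)                        -- unit property
    (hunit₂ : θ (star w) * x = 1)
    (hassoc : x * x = θ x * x)                       -- associativity
    (d : ℂ) (hxx : star x * x = d • (1 : N)) :       -- specialness
    θ (star x) * x = x * star x ∧ x * star x = star x * θ x := by
  by_cases htriv : (1 : N) = 0
  · have hall : ∀ a : N, a = 0 := fun a => by rw [← mul_one a, htriv, mul_zero]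
    rw [hall (θ (star x) * x), hall (x * star x), hall (star x * θ x)]
    exact ⟨rfl, rfl⟩
  -- d is real
  have hd : star d = d := by
    have h0 : star d • (1 : N) = d • (1 : N) := by
      have := congrArg star hxx
      rw [star_smul, star_mul, star_star, hxx, star_one] at this
      exact this.symm
    have h1 : (star d - d) • (1 : N) = 0 := by rw [sub_smul, h0, sub_self]
    have h2 := norm_smul (star d - d) (1 : N)
    rw [h1, norm_zero] at h2
    have h3 : ‖star d - d‖ = 0 := by
      rcases mul_eq_zero.mp h2.symm with h | h
      · exact h
      · exact absurd (norm_eq_zero.mp h) htriv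
    exact sub_eq_zero.mp (norm_eq_zero.mp h3)
  -- derived intertwining rules
  have hw' : ∀ n : N, star w * θ n = n * star w := fun n => by
    have h := congrArg star (hw (star n))
    rw [star_mul, star_mul, star_star, ← map_star, star_star] at h
    exact h.symm
  have rx : ∀ n z : N, x * (θ n * z) = θ (θ n) * (x * z) := fun n z => by
    rw [← mul_assoc, hx, mul_assoc]
  have r1 : ∀ z : N, star x * (x * z) = d • z := fun z => by
    rw [← mul_assoc, hxx, smul_mul_assoc, one_mul]
  have rθ : ∀ z : N, θ (star x) * (θ x * z) = d • z := fun z => by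
    rw [← mul_assoc, ← map_mul, hxx, map_smul, map_one, smul_mul_assoc, one_mul]
  have hassoc' : star x * star x = star x * θ (star x) := by
    have h := congrArg star hassoc
    rw [star_mul, star_mul, ← map_star] at h
    exact h
  have hAsA : star (θ (star x) * x) = star x * θ x := by
    rw [star_mul, ← map_star, star_star]
  -- A² = d • A for A = θ(x*) x
  have hAA : θ (star x) * x * (θ (star x) * x) = d • (θ (star x) * x) := by
    rw [mul_assoc (θ (star x)) x, rx, hassoc, ← mul_assoc (θ (star x)), ← map_mul,
      ← hassoc', ← mul_assoc, ← map_mul, mul_assoc (star x) (star x), hxx,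
      mul_smul_comm, mul_one, map_smul, smul_mul_assoc]
  have hA'A' : star x * θ x * (star x * θ x) = d • (star x * θ x) := by
    have h := congrArg star hAA
    rw [star_mul, hAsA, star_smul, hd, hAsA] at h
    exact h
  -- the four cross terms
  have t1 : star x * θ x * star x * (x * (θ (star x) * x))
      = d • (star x * θ x * (θ (star x) * x)) := by
    rw [mul_assoc (star x * θ x) (star x), r1, mul_smul_comm]
  have t2 : star x * θ x * star x * (θ x * (θ (star x) * x))
      = d • (star x * θ x * (θ (star x) * x)) := by
    rw [mul_assoc (star x * θ x) (star x), ← mul_assoc (star x) (θ x),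
      ← mul_assoc (star x * θ x) (star x * θ x), hA'A', smul_mul_assoc]
  have t3 : star x * θ x * θ (star x) * (x * (θ (star x) * x))
      = d • (star x * θ x * (θ (star x) * x)) := by
    rw [mul_assoc (star x * θ x) (θ (star x)), ← mul_assoc (θ (star x)) x, hAA,
      mul_smul_comm]
  have t4 : star x * θ x * θ (star x) * (θ x * (θ (star x) * x))
      = d • (star x * θ x * (θ (star x) * x)) := by
    rw [mul_assoc (star x * θ x) (θ (star x)), rθ, mul_smul_comm]
  -- Y* Y = 0 for Y = x θ(x*) x − θ(x) θ(x*) x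
  have hYY : star (x * (θ (star x) * x) - θ x * (θ (star x) * x))
      * (x * (θ (star x) * x) - θ x * (θ (star x) * x)) = 0 := by
    have sB : star (x * (θ (star x) * x)) = star x * θ x * star x := by
      rw [star_mul, hAsA]
    have sC : star (θ x * (θ (star x) * x)) = star x * θ x * θ (star x) := by
      rw [star_mul, hAsA, ← map_star]
    rw [star_sub, sB, sC, sub_mul, mul_sub, mul_sub, t1, t2, t3, t4]
    abel
  have hY : x * (θ (star x) * x) - θ x * (θ (star x) * x) = 0 := by
    have h := CStarRing.norm_star_mul_self
      (x := x * (θ (star x) * x) - θ x * (θ (star x) * x))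
    rw [hYY, norm_zero] at h
    have h0 : ‖x * (θ (star x) * x) - θ x * (θ (star x) * x)‖ = 0 := by
      nlinarith [norm_nonneg (x * (θ (star x) * x) - θ x * (θ (star x) * x))]
    exact norm_eq_zero.mp h0
  -- peel off with the unit
  have h5 : star w * (x * (θ (star x) * x)) = θ (star x) * x := by
    rw [← mul_assoc, hunit₁, one_mul]
  have h6 : star w * (θ x * (θ (star x) * x)) = x * star x := by
    rw [← mul_assoc, hw', mul_assoc, ← mul_assoc (star w), hw', mul_assoc,
      hunit₁, mul_one]
  have hAB : θ (star x) * x = x * star x := by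
    have h7 : θ (star x) * x - x * star x
        = star w * (x * (θ (star x) * x) - θ x * (θ (star x) * x)) := by
      rw [mul_sub, h5, h6]
    rw [hY, mul_zero] at h7
    exact sub_eq_zero.mp h7
  refine ⟨hAB, ?_⟩
  have h8 := congrArg star hAB
  rw [hAsA, star_mul, star_star] at h8
  exact h8.symm
end

section
/- Let A = (θ, w, x) be a Q-system (standard C* Frobenius algebra) and set r := x∘w ∈ Hom(id, θ). Then the pair (r, r̄ = r) solves the conjugacy relations for (θ, θ̄ = θ): (r* × 1_θ)∘(1_θ × r) = 1_θ and (1_θ × r*)∘(r × 1_θ) = 1_θ, and moreover r*∘r = dim(θ)·1, so (r, r) is a standard pair exhibiting θ as self-conjugate. -/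
/-- **Corollary 3.10**.  For a Q-system `A = (θ, w, x)` (a standard C* Frobenius
algebra, `w*∘w = d_A·1`, `x*∘x = d_A·1_θ`, `d_A = √dim(θ)`), the element
`r := x∘w ∈ Hom(id, θ²)` together with `r̄ = r` solves the conjugacy relations
`(r* × 1_θ)∘(1_θ × r) = 1_θ` and `(1_θ × r*)∘(r × 1_θ) = 1_θ`, and moreover
`r*∘r = dim(θ)·1`; hence `(r, r)` is a standard pair exhibiting `θ` as
self-conjugate. -/
theorem qsystem_r_is_standard_pair
    {N : Type*} [NormedRing N] [StarRing N] [CStarRing N]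
    [NormedAlgebra ℂ N] [StarModule ℂ N]
    (θ : N →⋆ₐ[ℂ] N) (w x : N)
    (dA : ℝ) (hdA : 0 < dA)
    (hw : ∀ n : N, w * n = θ n * w)
    (hx : ∀ n : N, x * θ n = θ (θ n) * x)
    (hunit₁ : star w * x = 1)
    (hunit₂ : θ (star w) * x = 1)
    (hassoc : x * x = θ x * x)
    (hfrob₁ : θ (star x) * x = x * star x)
    (hfrob₂ : x * star x = star x * θ x)
    (hww : star w * w = (dA : ℂ) • (1 : N))          -- standardness
    (hxx : star x * x = (dA : ℂ) • (1 : N)) :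
    (∀ n : N, (x * w) * n = θ (θ n) * (x * w)) ∧     -- `r ∈ Hom(id, θ²)`
    star (x * w) * θ (x * w) = 1 ∧                   -- `(r* × 1_θ)∘(1_θ × r) = 1_θ`
    θ (star (x * w)) * (x * w) = 1 ∧                 -- `(1_θ × r*)∘(r × 1_θ) = 1_θ`
    star (x * w) * (x * w) = ((dA ^ 2 : ℝ) : ℂ) • (1 : N) := by  -- `r*∘r = dim(θ)·1`
  have h1 : star x * w = 1 := by
    have := congrArg star hunit₁
    simpa [star_mul] using this
  have h2 : star x * θ w = 1 := by
    have := congrArg star hunit₂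
    simpa [star_mul, map_star] using this
  refine ⟨?_, ?_, ?_, ?_⟩
  · intro n
    rw [mul_assoc, hw n, ← mul_assoc, hx n, mul_assoc]
  · rw [star_mul, map_mul, mul_assoc, ← mul_assoc (star x), ← hfrob₂,
      mul_assoc x, h2, mul_one, hunit₁]
  · rw [star_mul, map_mul, mul_assoc, ← mul_assoc (θ (star x)), hfrob₁,
      mul_assoc x, h1, mul_one, hunit₂]
  · rw [star_mul, mul_assoc, ← mul_assoc (star x), hxx]
    rw [smul_mul_assoc, one_mul, mul_smul_comm, hww, smul_smul]
    push_cast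
    rw [sq]
end

section
/- Let (θ, w, x) be a Frobenius algebra. The linear maps q ↦ θ(q)∘x (from Hom(θ, id) to Hom(θ, θ)) and t ↦ w*∘t (from Hom(θ, θ) to Hom(θ, id)) are mutually inverse bijections between Hom(θ, id) and the subspace of elements t ∈ Hom(θ, θ) satisfying (1_θ × t)∘x = x∘t. Moreover, under this bijection, q satisfies (q × 1_θ)∘x = (1_θ × q)∘x if and only if the corresponding t additionally satisfies (t × 1_θ)∘x = x∘t, i.e., t ∈ Hom₀(θ, θ). -/
/-- **Lemma 3.21**.  For a Frobenius algebra `(θ, w, x)`, the linear maps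
`q ↦ θ(q)∘x` and `t ↦ w*∘t` are mutually inverse bijections between
`Hom(θ, id)` and the subspace of `t ∈ Hom(θ, θ)` with `(1_θ × t)∘x = x∘t`.
Moreover `q` satisfies `(q × 1_θ)∘x = (1_θ × q)∘x` iff the corresponding `t`
additionally satisfies `(t × 1_θ)∘x = x∘t`, i.e. `t ∈ Hom₀(θ, θ)`. -/
theorem frobenius_hom_id_bijection
    {N : Type*} [NormedRing N] [StarRing N] [CStarRing N]
    [NormedAlgebra ℂ N] [StarModule ℂ N]
    (θ : N →⋆ₐ[ℂ] N) (w x : N)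
    (hw : ∀ n : N, w * n = θ n * w)
    (hx : ∀ n : N, x * θ n = θ (θ n) * x)
    (hunit₁ : star w * x = 1) (hunit₂ : θ (star w) * x = 1)
    (hassoc : x * x = θ x * x)
    (hfrob₁ : θ (star x) * x = x * star x) (hfrob₂ : x * star x = star x * θ x) :
    -- `q ↦ t := θ(q)∘x` lands in the subspace and is inverted by `t ↦ w*∘t`
    (∀ q : N, (∀ n : N, q * θ n = n * q) →
        ((∀ n : N, (θ q * x) * θ n = θ n * (θ q * x)) ∧
         θ (θ q * x) * x = x * (θ q * x) ∧
         star w * (θ q * x) = q)) ∧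
    -- `t ↦ q := w*∘t` lands in `Hom(θ, id)` and is inverted by `q ↦ θ(q)∘x`
    (∀ t : N, (∀ n : N, t * θ n = θ n * t) → θ t * x = x * t →
        ((∀ n : N, (star w * t) * θ n = n * (star w * t)) ∧
         θ (star w * t) * x = t)) ∧
    -- correspondence between `(q × 1_θ)∘x = (1_θ × q)∘x` and `t ∈ Hom₀(θ,θ)`
    (∀ q : N, (∀ n : N, q * θ n = n * q) →
        (q * x = θ q * x ↔ (θ q * x) * x = x * (θ q * x))) := by

  have hw' : ∀ m : N, star w * θ m = m * star w := by
    intro m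
    have := congrArg star (hw (star m))
    simpa [star_mul, map_star] using this.symm
  refine ⟨?_, ?_, ?_⟩
  · intro q hq
    refine ⟨?_, ?_, ?_⟩
    · intro n
      calc θ q * x * θ n = θ q * (θ (θ n) * x) := by rw [mul_assoc, hx]
        _ = θ (q * θ n) * x := by rw [map_mul, mul_assoc]
        _ = θ (n * q) * x := by rw [hq]
        _ = θ n * (θ q * x) := by rw [map_mul, mul_assoc]
    · calc θ (θ q * x) * x = θ (θ q) * (θ x * x) := by rw [map_mul, mul_assoc]
        _ = θ (θ q) * (x * x) := by rw [hassoc]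
        _ = (θ (θ q) * x) * x := by rw [mul_assoc]
        _ = (x * θ q) * x := by rw [hx]
        _ = x * (θ q * x) := by rw [mul_assoc]
    · calc star w * (θ q * x) = (star w * θ q) * x := by rw [mul_assoc]
        _ = q * (star w * x) := by rw [hw', mul_assoc]
        _ = q := by rw [hunit₁, mul_one]
  · intro t ht ht'
    refine ⟨?_, ?_⟩
    · intro n
      calc star w * t * θ n = star w * (θ n * t) := by rw [mul_assoc, ht]
        _ = n * (star w * t) := by rw [← mul_assoc, hw', mul_assoc]
    · calc θ (star w * t) * x = θ (star w) * (θ t * x) := by rw [map_mul, mul_assoc]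
        _ = θ (star w) * x * t := by rw [ht', mul_assoc]
        _ = t := by rw [hunit₂, one_mul]
  · intro q hq
    have key : ∀ m : N, star w * (θ m * x) = m := by
      intro m
      calc star w * (θ m * x) = (star w * θ m) * x := by rw [mul_assoc]
        _ = m * (star w * x) := by rw [hw', mul_assoc]
        _ = m := by rw [hunit₁, mul_one]
    have lhs : θ q * x * x = θ (q * x) * x := by
      rw [map_mul, mul_assoc, mul_assoc, hassoc]
    have rhs : x * (θ q * x) = θ (θ q * x) * x := by
      calc x * (θ q * x) = (x * θ q) * x := by rw [mul_assoc]
        _ = θ (θ q) * x * x := by rw [hx]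
        _ = θ (θ q) * (θ x * x) := by rw [mul_assoc, hassoc]
        _ = θ (θ q * x) * x := by rw [map_mul, mul_assoc]
    constructor
    · intro h
      rw [lhs, rhs, h]
    · intro h
      rw [lhs, rhs] at h
      calc q * x = star w * (θ (q * x) * x) := (key _).symm
        _ = star w * (θ (θ q * x) * x) := by rw [h]
        _ = θ q * x := key _
end

section
/- Every left module (β, m) of a Q-system A = (θ, w, x) is equivalent to a standard module: the element n := (m*∘m)^{1/2} ∈ Hom(β, β) is invertible and positive (indeed m*∘m ≥ d_A^{-1}·1_β), and the equivalent module (β, (1_θ × n)∘m∘n^{-1}) satisfies m'*∘m' = d_A·1_β. -/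
/-- Multiplying both sides of an inequality by a nonnegative real scalar
(coerced to `ℂ`) preserves the inequality, by a conjugation trick. -/
private lemma real_smul_le_smul
    {N : Type*} [NormedRing N] [StarRing N]
    [NormedAlgebra ℂ N] [StarModule ℂ N]
    [PartialOrder N] [StarOrderedRing N]
    {a b : N} (h : a ≤ b) {r : ℝ} (hr : 0 ≤ r) :
    ((r : ℝ) : ℂ) • a ≤ ((r : ℝ) : ℂ) • b := by
  have key := star_left_conjugate_le_conjugate h (((Real.sqrt r : ℝ) : ℂ) • (1 : N))
  have hs : ∀ z : N,
      star (((Real.sqrt r : ℝ) : ℂ) • (1 : N)) * z * (((Real.sqrt r : ℝ) : ℂ) • (1 : N))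
        = ((r : ℝ) : ℂ) • z := by
    intro z
    simp only [star_smul, star_one, smul_mul_assoc, mul_smul_comm, one_mul, mul_one,
      smul_smul]
    congr 1
    simp only [Complex.star_def, Complex.conj_ofReal, ← Complex.ofReal_mul,
      Real.mul_self_sqrt hr]
  rwa [hs a, hs b] at key

/-- **Lemma 3.24 (ii)**.  Every left module `(β, m)` of a Q-system `A = (θ, w, x)`
is equivalent to a standard module: `m*∘m ≥ d_A⁻¹·1_β`, the positive square root
`n` of `m*∘m` is invertible, and the equivalent module
`(β, m' = (1_θ × n)∘m∘n⁻¹)` satisfies `m'*∘m' = d_A·1_β`. -/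
theorem module_equivalent_to_standard
    {N : Type*} [NormedRing N] [StarRing N] [CStarRing N]
    [NormedAlgebra ℂ N] [StarModule ℂ N] [CompleteSpace N]
    [PartialOrder N] [StarOrderedRing N]
    (θ : N →⋆ₐ[ℂ] N) (w x : N)
    (dA : ℝ) (hdA : 0 < dA)
    (hw : ∀ n : N, w * n = θ n * w)
    (hx : ∀ n : N, x * θ n = θ (θ n) * x)
    (hunit₁ : star w * x = 1) (hunit₂ : θ (star w) * x = 1)
    (hassoc : x * x = θ x * x)
    (hfrob₁ : θ (star x) * x = x * star x) (hfrob₂ : x * star x = star x * θ x)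
    (hww : star w * w = (dA : ℂ) • (1 : N))
    (hxx : star x * x = (dA : ℂ) • (1 : N))
    -- the (not necessarily standard) module `(β, m)`
    (β : N →⋆ₐ[ℂ] N) (m : N)
    (hm : ∀ n : N, m * β n = θ (β n) * m)
    (hmunit : star w * m = 1)
    (hmrep : θ m * m = x * m)
    -- `n := (m*∘m)^{1/2}`: the positive square root of `m*∘m`
    (n : N) (hn_pos : (0 : N) ≤ n) (hn_sq : n * n = star m * m) :
    (((dA⁻¹ : ℝ) : ℂ) • (1 : N) ≤ star m * m) ∧
    IsUnit n ∧
    (∀ n' : N, n * n' = 1 → n' * n = 1 →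
        star (θ n * m * n') * (θ n * m * n') = (dA : ℂ) • (1 : N)) := by
  letI : CStarAlgebra N := ⟨⟩
  have hdA' : (0 : ℝ) ≤ dA := hdA.le
  have hdAinv : (0 : ℝ) ≤ dA⁻¹ := inv_nonneg.mpr hdA'
  have hec : ((dA⁻¹ : ℝ) : ℂ) * ((dA : ℝ) : ℂ) = 1 := by
    rw [← Complex.ofReal_mul, inv_mul_cancel₀ hdA.ne']; norm_num
  have hce : ((dA : ℝ) : ℂ) * ((dA⁻¹ : ℝ) : ℂ) = 1 := by
    rw [mul_comm]; exact hec
  set e : ℂ := ((dA⁻¹ : ℝ) : ℂ) with he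
  set c : ℂ := ((dA : ℝ) : ℂ) with hc
  -- `q = w w*` satisfies `q² = dA • q`, is selfadjoint and nonnegative
  set q : N := w * star w with hq
  have hq_sa : star q = q := by simp [hq, star_mul]
  have hqq : q * q = c • q := by
    have : q * q = w * (star w * w) * star w := by
      simp only [hq, mul_assoc]
    rw [this, hww, mul_smul_comm, smul_mul_assoc, mul_one]
  -- `p = dA⁻¹ • q` is a selfadjoint idempotent, hence `p ≤ 1`
  set p : N := e • q with hp
  have hp_sa : star p = p := by
    rw [hp, star_smul, hq_sa, he, Complex.star_def, Complex.conj_ofReal]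
  have hpp : p * p = p := by
    rw [hp, smul_mul_assoc, mul_smul_comm, hqq, smul_smul, smul_smul,
      mul_assoc, hec, mul_one]
  have h1p : (0 : N) ≤ 1 - p := by
    have h2 : star (1 - p) * (1 - p) = 1 - p := by
      rw [star_sub, star_one, hp_sa, sub_mul, one_mul, mul_sub, mul_one, hpp]
      abel
    calc (0 : N) ≤ star (1 - p) * (1 - p) := star_mul_self_nonneg _
      _ = 1 - p := h2
  have hp_le : p ≤ 1 := sub_nonneg.mp h1p
  -- hence `w w* ≤ dA • 1`
  have hq_le : q ≤ c • (1 : N) := by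
    have := real_smul_le_smul hp_le hdA'
    rwa [hp, smul_smul, ← hc, hce, one_smul] at this
  -- `1 = m* (w w*) m ≤ dA • (m* m)`
  have hmw : star m * w = 1 := by
    have := congrArg star hmunit
    rwa [star_mul, star_star, star_one] at this
  have hone : (1 : N) = star m * q * m := by
    have : star m * q * m = (star m * w) * (star w * m) := by
      simp only [hq, mul_assoc]
    rw [this, hmw, hmunit, one_mul]
  have h1le : (1 : N) ≤ c • (star m * m) := by
    have hstep := star_left_conjugate_le_conjugate hq_le m
    have hr : star m * (c • (1 : N)) * m = c • (star m * m) := by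
      rw [mul_smul_comm, smul_mul_assoc, mul_one]
    rw [hr] at hstep
    calc (1 : N) = star m * q * m := hone
      _ ≤ c • (star m * m) := hstep
  -- first claim
  have goal1 : ((dA⁻¹ : ℝ) : ℂ) • (1 : N) ≤ star m * m := by
    have := real_smul_le_smul h1le hdAinv
    rwa [smul_smul, ← he, hec, one_smul] at this
  refine ⟨goal1, ?_, ?_⟩
  · -- invertibility of `n`
    have h0N : (0 : N) ≤ e • (1 : N) := by
      have h01 : (0 : N) ≤ 1 := by
        simpa using star_mul_self_nonneg (1 : N)
      have := real_smul_le_smul h01 hdAinv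
      rwa [smul_zero, ← he] at this
    have hUnit : IsUnit (e • (1 : N)) :=
      ⟨⟨e • (1 : N), c • (1 : N),
        by rw [smul_mul_smul_comm, one_mul, hec, one_smul],
        by rw [smul_mul_smul_comm, one_mul, hce, one_smul]⟩, rfl⟩
    have hmmUnit : IsUnit (star m * m) :=
      CStarAlgebra.isUnit_of_le _ goal1 ⟨h0N, hUnit⟩
    rw [← hn_sq] at hmmUnit
    obtain ⟨u, hu⟩ := hmmUnit
    set v : N := ((u⁻¹ : Nˣ) : N) with hv
    have hv1 : (n * n) * v = 1 := by rw [← hu]; exact u.mul_inv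
    have hv2 : v * (n * n) = 1 := by rw [← hu]; exact u.inv_mul
    have hcomm : v * n = n * v := by
      calc v * n = v * n * ((n * n) * v) := by rw [hv1, mul_one]
        _ = v * (n * n) * (n * v) := by simp only [mul_assoc]
        _ = n * v := by rw [hv2, one_mul]
    refine ⟨⟨n, n * v, ?_, ?_⟩, rfl⟩
    · show n * (n * v) = 1
      rw [← mul_assoc]; exact hv1
    · show (n * v) * n = 1
      rw [← hcomm, mul_assoc]; exact hv2
  · -- the standardness identity
    intro n' hnn' hn'n
    have hn_sa : star n = n := IsSelfAdjoint.of_nonneg hn_pos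
    have hn'_sa : star n' = n' := by
      have h1 : star n' * n = 1 := by
        have := congrArg star hnn'
        rwa [star_mul, hn_sa, star_one] at this
      have h2 : n * star n' = 1 := by
        have := congrArg star hn'n
        rwa [star_mul, hn_sa, star_one] at this
      calc star n' = star n' * (n * n') := by rw [hnn', mul_one]
        _ = (star n' * n) * n' := by rw [mul_assoc]
        _ = n' := by rw [h1, one_mul]
    have hθn_sa : star (θ n) = θ n := by rw [← map_star, hn_sa]
    -- key identity: `m* θ(m* m) m = dA • (m* m)`
    have hms : star m * θ (star m) = star m * star x := by
      have := congrArg star hmrep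
      rwa [star_mul, star_mul, ← map_star] at this
    have hkey : star m * θ (star m * m) * m = c • (star m * m) := by
      calc star m * θ (star m * m) * m
          = (star m * θ (star m)) * (θ m * m) := by
            rw [map_mul]; simp only [mul_assoc]
        _ = (star m * star x) * (x * m) := by rw [hms, hmrep]
        _ = star m * (star x * x) * m := by simp only [mul_assoc]
        _ = c • (star m * m) := by
            rw [hxx, mul_smul_comm, smul_mul_assoc, mul_one]
    calc star (θ n * m * n') * (θ n * m * n')
        = star n' * (star m * (θ n * θ n) * m) * n' := by
          simp only [star_mul, hθn_sa, hn'_sa, mul_assoc]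
      _ = star n' * (star m * θ (star m * m) * m) * n' := by
          rw [← map_mul, hn_sq]
      _ = star n' * (c • (star m * m)) * n' := by rw [hkey]
      _ = c • ((star n' * (n * n)) * n') := by
          rw [← hn_sq, mul_smul_comm, smul_mul_assoc, mul_assoc]
      _ = (dA : ℂ) • (1 : N) := by
          rw [hn'_sa, ← mul_assoc, hn'n, one_mul, hnn']
end

section
/- Let (β, m) be a standard module of a Q-system A = (θ, w, x). Then the 'Frobenius-type' relation (x* × 1_β)∘(1_θ × m) = m∘m* = (1_θ × m*)∘(x × 1_β) holds. Consequently, m* = (r* × 1_β)∘(1_θ × m) with r = x∘w, and E := d_A^{-1}·(x* × 1_β)∘(1_θ × m) is a projection (self-adjoint idempotent) in Hom(θβ, θβ). -/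
/-- **Lemma 3.25**.  For a standard module `(β, m)` of a Q-system `A = (θ, w, x)`,
the Frobenius-type relation
`(x* × 1_β)∘(1_θ × m) = m∘m* = (1_θ × m*)∘(x × 1_β)` holds.  Consequently
`m* = (r* × 1_β)∘(1_θ × m)` with `r = x∘w`, and
`E := d_A⁻¹·(x* × 1_β)∘(1_θ × m)` is a projection in `Hom(θβ, θβ)`. -/
theorem standard_module_frobenius_relation
    {N : Type*} [NormedRing N] [StarRing N] [CStarRing N]
    [NormedAlgebra ℂ N] [StarModule ℂ N]
    (θ : N →⋆ₐ[ℂ] N) (w x : N)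
    (dA : ℝ) (hdA : 0 < dA)
    (hw : ∀ n : N, w * n = θ n * w)
    (hx : ∀ n : N, x * θ n = θ (θ n) * x)
    (hunit₁ : star w * x = 1) (hunit₂ : θ (star w) * x = 1)
    (hassoc : x * x = θ x * x)
    (hfrob₁ : θ (star x) * x = x * star x) (hfrob₂ : x * star x = star x * θ x)
    (hww : star w * w = (dA : ℂ) • (1 : N))
    (hxx : star x * x = (dA : ℂ) • (1 : N))
    -- the standard module `(β, m)`
    (β : N →⋆ₐ[ℂ] N) (m : N)
    (hm : ∀ n : N, m * β n = θ (β n) * m)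
    (hmunit : star w * m = 1)
    (hmrep : θ m * m = x * m)
    (hmstd : star m * m = (dA : ℂ) • (1 : N)) :
    star x * θ m = m * star m ∧                       -- `(x* × 1_β)∘(1_θ × m) = m∘m*`
    m * star m = θ (star m) * x ∧                     -- `m∘m* = (1_θ × m*)∘(x × 1_β)`
    star m = star (x * w) * θ m ∧                     -- `m* = (r* × 1_β)∘(1_θ × m)`
    (let E : N := ((dA⁻¹ : ℝ) : ℂ) • (star x * θ m)
     star E = E ∧ E * E = E) := by                    -- `E` is a projection
  set c : ℂ := (dA : ℂ) with hc
  have hcne : c ≠ 0 := by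
    simp [hc, Complex.ofReal_ne_zero, ne_of_gt hdA]
  -- star w moves past θ-images
  have f1 : ∀ s : N, star w * θ s = s * star w := by
    intro s
    have h := congrArg star (hw (star s))
    simpa [star_mul, map_star, star_star] using h.symm
  -- star of hmrep
  have h1 : star m * θ (star m) = star m * star x := by
    have h := congrArg star hmrep
    simpa [star_mul, map_star] using h
  have hθc : θ (c • (1 : N)) = c • 1 := by simp
  -- m* x* θm = c • m*
  have h3 : star m * (star x * θ m) = c • star m := by
    calc star m * (star x * θ m) = (star m * star x) * θ m := by rw [mul_assoc]
    _ = (star m * θ (star m)) * θ m := by rw [h1]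
    _ = star m * θ (star m * m) := by rw [map_mul, mul_assoc]
    _ = star m * (c • 1) := by rw [hmstd, hθc]
    _ = c • star m := by rw [mul_smul_comm, mul_one]
  -- x* θm m = c • m
  have h2 : star x * (θ m * m) = c • m := by
    rw [hmrep, ← mul_assoc, hxx, smul_mul_assoc, one_mul]
  -- mm* mm* = c • mm*
  have hmm : (m * star m) * (m * star m) = c • (m * star m) := by
    calc (m * star m) * (m * star m) = m * (star m * m) * star m := by
          rw [mul_assoc, mul_assoc, mul_assoc]
    _ = m * (c • (1:N)) * star m := by rw [hmstd]
    _ = c • (m * star m) := by rw [mul_smul_comm, mul_one, smul_mul_assoc]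
  set a : N := star x * θ m - m * star m with hadef
  have hstar_a : star a = θ (star m) * x - m * star m := by
    simp [hadef, star_sub, star_mul, map_star, mul_assoc]
  -- a* a = c • a*
  have haa : star a * a = c • star a := by
    rw [hstar_a, hadef]
    have t1 : (θ (star m) * x) * (star x * θ m) = c • (θ (star m) * x) := by
      calc (θ (star m) * x) * (star x * θ m)
          = θ (star m) * (x * star x) * θ m := by noncomm_ring
        _ = θ (star m) * (θ (star x) * x) * θ m := by rw [hfrob₁]
        _ = θ (star m * star x) * (x * θ m) := by simp only [map_mul]; noncomm_ring
        _ = θ (star m * star x) * (θ (θ m) * x) := by rw [hx]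
        _ = θ (star m * star x * θ m) * x := by simp only [map_mul]; noncomm_ring
        _ = θ (star m * (star x * θ m)) * x := by rw [mul_assoc]
        _ = θ (c • star m) * x := by rw [h3]
        _ = c • (θ (star m) * x) := by rw [map_smul, smul_mul_assoc]
    have t2 : (θ (star m) * x) * (m * star m) = c • (m * star m) := by
      calc (θ (star m) * x) * (m * star m)
          = θ (star m) * (x * m) * star m := by noncomm_ring
        _ = θ (star m) * (θ m * m) * star m := by rw [hmrep]
        _ = θ (star m * m) * (m * star m) := by simp only [map_mul]; noncomm_ring
        _ = (c • (1:N)) * (m * star m) := by rw [hmstd, hθc]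
        _ = c • (m * star m) := by rw [smul_mul_assoc, one_mul]
    have t3 : (m * star m) * (star x * θ m) = c • (m * star m) := by
      calc (m * star m) * (star x * θ m)
          = m * (star m * (star x * θ m)) := by noncomm_ring
        _ = m * (c • star m) := by rw [h3]
        _ = c • (m * star m) := by rw [mul_smul_comm]
    calc (θ (star m) * x - m * star m) * (star x * θ m - m * star m)
        = (θ (star m) * x) * (star x * θ m) - (θ (star m) * x) * (m * star m)
          - (m * star m) * (star x * θ m) + (m * star m) * (m * star m) := by noncomm_ring
      _ = c • (θ (star m) * x) - c • (m * star m) - c • (m * star m) + c • (m * star m) := by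
          rw [t1, t2, t3, hmm]
      _ = c • (θ (star m) * x - m * star m) := by rw [smul_sub]; abel
  -- a is self-adjoint
  have hsa : star a = a := by
    have h := congrArg star haa
    rw [star_mul, star_star, star_smul] at h
    have hcc : star c = c := by simp [hc]
    rw [hcc, star_star] at h
    -- h : star a * a = c • a ; haa : star a * a = c • star a
    have h2' : c • star a = c • a := by rw [← haa, h]
    have h3' : c • (star a - a) = 0 := by rw [smul_sub, h2', sub_self]
    rcases smul_eq_zero.mp h3' with hcz | hz
    · exact absurd hcz hcne
    · exact sub_eq_zero.mp hz
  -- a * a = c • a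
  have haa2 : a * a = c • a := by nth_rewrite 1 [← hsa]; rw [haa, hsa]
  -- the conditional expectation kills a : x* θ(a) x = 0
  have hδ : star x * (θ a * x) = 0 := by
    have hθa : θ a = θ (star x) * θ (θ m) - θ m * θ (star m) := by
      rw [hadef]; simp [map_sub, map_mul]
    have tA : star x * ((θ (star x) * θ (θ m)) * x) = c • (star x * θ m) := by
      calc star x * ((θ (star x) * θ (θ m)) * x)
          = star x * θ (star x) * (θ (θ m) * x) := by noncomm_ring
        _ = star x * θ (star x) * (x * θ m) := by rw [hx]
        _ = star x * (θ (star x) * x) * θ m := by noncomm_ring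
        _ = star x * (x * star x) * θ m := by rw [hfrob₁]
        _ = (star x * x) * (star x * θ m) := by noncomm_ring
        _ = c • (star x * θ m) := by rw [hxx, smul_mul_assoc, one_mul]
    have hsplit : star x * θ m = m * star m + a := by rw [hadef]; abel
    have hmma : (m * star m) * a = 0 := by
      have : (m * star m) * (star x * θ m) = c • (m * star m) := by
        calc (m * star m) * (star x * θ m)
            = m * (star m * (star x * θ m)) := by noncomm_ring
          _ = m * (c • star m) := by rw [h3]
          _ = c • (m * star m) := by rw [mul_smul_comm]
      calc (m * star m) * a
          = (m * star m) * (star x * θ m) - (m * star m) * (m * star m) := by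
            rw [hadef]; noncomm_ring
        _ = c • (m * star m) - c • (m * star m) := by rw [this, hmm]
        _ = 0 := sub_self _
    have hamm : a * (m * star m) = 0 := by
      have h' := congrArg star hmma
      rw [star_mul, star_mul, star_star, hsa, star_zero] at h'
      simpa [mul_assoc] using h'
    have tB : (star x * θ m) * (θ (star m) * x) = c • (star x * θ m) := by
      have hst : θ (star m) * x = m * star m + a := by
        have h' := congrArg star hsplit
        simp only [star_mul, star_add, star_star, hsa] at h'
        rw [← map_star] at h'
        exact h'
      calc (star x * θ m) * (θ (star m) * x)
          = (m * star m + a) * (m * star m + a) := by rw [hsplit, hst]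
        _ = (m * star m) * (m * star m) + (m * star m) * a + a * (m * star m) + a * a := by
            noncomm_ring
        _ = c • (m * star m) + 0 + 0 + c • a := by rw [hmm, hmma, hamm, haa2]
        _ = c • (m * star m + a) := by rw [smul_add]; abel
        _ = c • (star x * θ m) := by rw [← hsplit]
    calc star x * (θ a * x)
        = star x * ((θ (star x) * θ (θ m)) * x) - (star x * θ m) * (θ (star m) * x) := by
          rw [hθa]; noncomm_ring
      _ = c • (star x * θ m) - c • (star x * θ m) := by rw [tA, tB]
      _ = 0 := sub_self _
  -- θ(a) * x = 0 via the C*-identity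
  have hyz : θ a * x = 0 := by
    set y : N := θ a * x with hy
    have hsy : star y * y = 0 := by
      calc star y * y = star x * θ (star a) * (θ a * x) := by
            rw [hy, star_mul, map_star]
        _ = star x * (θ (star a * a) * x) := by simp only [map_mul]; noncomm_ring
        _ = star x * (θ (c • star a) * x) := by rw [haa]
        _ = c • (star x * (θ (star a) * x)) := by
            rw [map_smul, smul_mul_assoc, mul_smul_comm]
        _ = c • (star x * (θ a * x)) := by rw [hsa]
        _ = 0 := by rw [hδ, smul_zero]
    have hn : ‖y‖ * ‖y‖ = 0 := by
      rw [← CStarRing.norm_star_mul_self, hsy, norm_zero]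
    have : ‖y‖ = 0 := by
      rcases mul_self_eq_zero.mp hn with h
      exact h
    exact norm_eq_zero.mp this
  -- conclude a = 0
  have ha0 : a = 0 := by
    calc a = a * (star w * x) := by rw [hunit₁, mul_one]
      _ = (a * star w) * x := by rw [mul_assoc]
      _ = (star w * θ a) * x := by rw [f1]
      _ = star w * (θ a * x) := by rw [mul_assoc]
      _ = 0 := by rw [hyz, mul_zero]
  have hmain : star x * θ m = m * star m := by
    have := sub_eq_zero.mp ha0
    simpa [hadef] using this
  refine ⟨hmain, ?_, ?_, ?_⟩
  · have h' := congrArg star hmain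
    simp only [star_mul, star_star] at h'
    rw [← map_star] at h'
    exact h'.symm
  · rw [star_mul]
    rw [mul_assoc]
    rw [hmain]
    rw [← mul_assoc, hmunit, one_mul]
  · intro E
    have hE : E = ((dA⁻¹ : ℝ) : ℂ) • (m * star m) := by
      show ((dA⁻¹ : ℝ) : ℂ) • (star x * θ m) = _
      rw [hmain]
    constructor
    · rw [hE, star_smul, star_mul, star_star]
      simp [Complex.conj_ofReal]
    · rw [hE, smul_mul_assoc, mul_smul_comm, hmm, smul_smul, smul_smul, hc]
      congr 1
      have : (dA : ℂ) ≠ 0 := hcne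
      push_cast
      field_simp
end

section
/- Let A = (θ, w, x) be a Q-system in End₀(N) with extension ι : N → M, and P ∈ Hom(θ, θ) a projection satisfying (P × P)∘x = (P × 1_θ)∘x∘P = (1_θ × P)∘x∘P and P∘w = w. Then r*∘(P × P)∘r = Tr_θ(P), where r = x∘w; moreover L_P := ι(N P)v = {ι(nP)v : n ∈ N} is a von Neumann subalgebra of M containing ι(N) (an intermediate extension), closed under the *-operation: (ι(nP)v)* = ι(r*θ(n*)P)v. -/
/-- **Proposition 4.9** (intermediate Q-systems).  Let `A = (θ, w, x)` be a
Q-system in `End₀(N)` with extension `ι : N → M = ι(N)v`, and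
`P ∈ Hom(θ, θ)` a projection satisfying
`(P × P)∘x = (P × 1_θ)∘x∘P = (1_θ × P)∘x∘P` and `P∘w = w`.  Then
`r*∘(P × P)∘r = Tr_θ(P)` (with `r = x∘w` and `Tr_θ(t) = r*∘(1_θ × t)∘r`), and
`L_P := ι(NP)v = {ι(nP)v : n ∈ N}` is a (von Neumann) subalgebra of `M`
containing `ι(N)` — an intermediate extension — closed under the *-operation:
`(ι(nP)v)* = ι(r*θ(n*)P)v`. -/
theorem intermediate_qsystem_subalgebra
    {N : Type*} [NormedRing N] [StarRing N] [CStarRing N]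
    [NormedAlgebra ℂ N] [StarModule ℂ N]
    {M : Type*} [NormedRing M] [StarRing M] [CStarRing M]
    [NormedAlgebra ℂ M] [StarModule ℂ M]
    (θ : N →⋆ₐ[ℂ] N) (w x : N) (dA : ℝ) (hdA : 0 < dA)
    (hw : ∀ n : N, w * n = θ n * w)
    (hx : ∀ n : N, x * θ n = θ (θ n) * x)
    (hunit₁ : star w * x = 1) (hunit₂ : θ (star w) * x = 1)
    (hassoc : x * x = θ x * x)
    (hfrob₁ : θ (star x) * x = x * star x) (hfrob₂ : x * star x = star x * θ x)
    (hww : star w * w = (dA : ℂ) • (1 : N))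
    (hxx : star x * x = (dA : ℂ) • (1 : N))
    -- the extension `N ⊂ M = ι(N)v`
    (ι : N →⋆ₐ[ℂ] M) (v : M)
    (hv : ∀ n : N, v * ι n = ι (θ n) * v)
    (hv2 : v * v = ι x * v)
    (hvs : star v = ι (star (x * w)) * v)
    (hone : (1 : M) = ι (star w) * v)
    -- the projection `P`: two of the three `P`-insertions on `x` imply the third
    (P : N)
    (hP_int : ∀ n : N, P * θ n = θ n * P)
    (hP_sa : star P = P) (hP_idem : P * P = P)
    (hP₁ : P * θ P * x = P * x * P)        -- `(P × P)∘x = (P × 1_θ)∘x∘P`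
    (hP₂ : P * x * P = θ P * x * P)        -- `(P × 1_θ)∘x∘P = (1_θ × P)∘x∘P`
    (hPw : P * w = w) :                     -- `P∘w = w`
    -- `r*∘(P × P)∘r = Tr_θ(P)`
    star (x * w) * (P * θ P) * (x * w) = star (x * w) * θ P * (x * w) ∧
    -- `L_P = ι(NP)v` is an intermediate subalgebra, closed under `*`
    (let LP : Set M := {m : M | ∃ k : N, m = ι (k * P) * v}
     (∀ n : N, ι n ∈ LP) ∧
     (1 : M) ∈ LP ∧
     (∀ a ∈ LP, ∀ b ∈ LP, a * b ∈ LP) ∧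
     (∀ a ∈ LP, star a ∈ LP) ∧
     (∀ k : N, star (ι (k * P) * v) = ι (star (x * w) * θ (star k) * P) * v)) := by

  -- basic consequences
  have key : P * θ P * x = θ P * x * P := hP₁.trans hP₂
  have keyR : P * (θ P * x) = θ P * (x * P) := by
    simpa [mul_assoc] using key
  have hwP : star w * P = star w := by
    simpa [star_mul, hP_sa] using congrArg star hPw
  have key2 : P * x * w = θ P * x * w := by
    rw [← hPw, ← mul_assoc, ← mul_assoc, hP₂]
  have hθP : star (θ P) = θ P := by rw [← map_star, hP_sa]
  have key3 : star (x * w) * P = star (x * w) * θ P := by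
    have := congrArg star key2
    simpa [star_mul, hP_sa, hθP, mul_assoc] using this
  -- part 1
  have part1 : star (x * w) * (P * θ P) * (x * w) = star (x * w) * θ P * (x * w) := by
    have sub : (P * θ P) * (x * w) = θ P * (x * w) := by
      calc (P * θ P) * (x * w) = P * θ P * x * w := (mul_assoc (P * θ P) x w).symm
        _ = θ P * x * P * w := by rw [key]
        _ = θ P * x * (P * w) := by rw [mul_assoc]
        _ = θ P * (x * w) := by rw [hPw, mul_assoc]
    rw [mul_assoc, sub, ← mul_assoc]
  refine ⟨part1, ?_⟩
  intro LP
  -- ι(N) ⊆ L_P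
  have hmem : ∀ n : N, ι n = ι (n * star w * P) * v := by
    intro n
    rw [mul_assoc, hwP, map_mul, mul_assoc, ← hone, mul_one]
  have h1 : ∀ n : N, ι n ∈ LP := fun n => ⟨n * star w, hmem n⟩
  -- star formula
  have hstar : ∀ k : N, star (ι (k * P) * v)
      = ι (star (x * w) * θ (star k) * P) * v := by
    intro k
    have hN : star (x * w) * (θ P * θ (star k)) = star (x * w) * θ (star k) * P := by
      calc star (x * w) * (θ P * θ (star k))
          = star (x * w) * θ P * θ (star k) := by rw [mul_assoc]
        _ = star (x * w) * P * θ (star k) := by rw [← key3]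
        _ = star (x * w) * (P * θ (star k)) := by rw [mul_assoc]
        _ = star (x * w) * (θ (star k) * P) := by rw [hP_int]
        _ = star (x * w) * θ (star k) * P := by rw [mul_assoc]
    calc star (ι (k * P) * v) = star v * star (ι (k * P)) := by rw [star_mul]
      _ = ι (star (x * w)) * v * ι (star (k * P)) := by rw [hvs, ← map_star]
      _ = ι (star (x * w)) * (v * ι (star (k * P))) := by rw [mul_assoc]
      _ = ι (star (x * w)) * (ι (θ (star (k * P))) * v) := by rw [hv]
      _ = ι (star (x * w)) * ι (θ (star (k * P))) * v := by rw [mul_assoc]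
      _ = ι (star (x * w) * θ (star (k * P))) * v := by rw [map_mul]
      _ = ι (star (x * w) * (θ P * θ (star k))) * v := by
            have : θ (star (k * P)) = θ P * θ (star k) := by
              rw [star_mul, hP_sa, map_mul]
            rw [this]
      _ = ι (star (x * w) * θ (star k) * P) * v := by rw [hN]
  -- multiplication closure
  have hmul : ∀ a ∈ LP, ∀ b ∈ LP, a * b ∈ LP := by
    rintro a ⟨k₁, rfl⟩ b ⟨k₂, rfl⟩
    refine ⟨k₁ * θ k₂ * θ P * x, ?_⟩
    have hN : k₁ * P * θ (k₂ * P) * x = k₁ * θ k₂ * θ P * x * P := by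
      simp only [map_mul, mul_assoc]
      rw [← mul_assoc P (θ k₂), hP_int k₂, mul_assoc (θ k₂) P, keyR]
    calc ι (k₁ * P) * v * (ι (k₂ * P) * v)
        = ι (k₁ * P) * (v * ι (k₂ * P)) * v := by
          simp only [mul_assoc]
      _ = ι (k₁ * P) * (ι (θ (k₂ * P)) * v) * v := by rw [hv]
      _ = ι (k₁ * P) * ι (θ (k₂ * P)) * (v * v) := by simp only [mul_assoc]
      _ = ι (k₁ * P) * ι (θ (k₂ * P)) * (ι x * v) := by rw [hv2]
      _ = ι (k₁ * P * θ (k₂ * P) * x) * v := by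
          simp only [map_mul, mul_assoc]
      _ = ι (k₁ * θ k₂ * θ P * x * P) * v := by rw [hN]
  have hstarmem : ∀ a ∈ LP, star a ∈ LP := by
    rintro a ⟨k, rfl⟩
    exact ⟨star (x * w) * θ (star k), (hstar k)⟩
  exact ⟨h1, (by simpa using h1 1), hmul, hstarmem, hstar⟩
end
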